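/- Define D*(A_1,...,A_m; {i_0}) for pairwise disjoint finite sets by the identity D*(A_1,...,A_m; {i_0}) = Π_{k=1}^m L_k(A_k) · (1 - Σ_{k'=1}^m L_{k'}(A_{k'} ∪ {i_0})/L_{k'}(A_{k'})), where L_k = L*_{H_k,p_k,c_k}. Under ASSUMPTION (a,b) (in particular Σ_{k'=1}^m (p_{k'} + c_{k'} d^{2H_{k'}-2}) < 1 for all positive integers d and the three-point inequality (2.9)), D*(A_1,...,A_m; {i_0}) > 0. -/

import Mathlib

open Finset

/-- The operator L*_{H,p,c} of the paper. -/
noncomputable def Lop (H p c : ℝ) (A : Finset ℕ) : ℝ :=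
  if A = ∅ then 1
  else
    p * ∏ j ∈ Finset.range (A.card - 1),
      (p + c * (((A.sort (· ≤ ·)).getD (j + 1) 0 - (A.sort (· ≤ ·)).getD j 0 : ℕ) : ℝ)
        ^ (2 * H - 2))

lemma rpow_incr {α : ℝ} (hα : α < 0) {x y : ℝ} (hx : 1 ≤ x) (hy : 1 ≤ y) :
    x ^ α + (1 + y) ^ α ≤ 1 + (x + y) ^ α := by
  have hy0 : (0:ℝ) < y := by linarith
  have key : AntitoneOn (fun t : ℝ => t ^ α - (t + y) ^ α) (Set.Ici 1) := by
    have hderiv : ∀ t : ℝ, 1 ≤ t →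
        HasDerivAt (fun t : ℝ => t ^ α - (t + y) ^ α)
          (α * t ^ (α - 1) - α * (t + y) ^ (α - 1) * 1) t := by
      intro t ht
      have h1 : HasDerivAt (fun t : ℝ => t ^ α) (α * t ^ (α - 1)) t := by
        simpa [mul_comm] using Real.hasDerivAt_rpow_const (p := α) (Or.inl (by linarith : t ≠ 0))
      have h2 : HasDerivAt (fun t : ℝ => (t + y) ^ α) (α * (t + y) ^ (α - 1) * 1) t := by
        have hb : HasDerivAt (fun t : ℝ => t + y) 1 t := (hasDerivAt_id t).add_const y
        have := (Real.hasDerivAt_rpow_const (x := t + y) (p := α)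
          (Or.inl (by linarith : t + y ≠ 0))).comp t hb
        simpa [mul_comm, Function.comp_def] using this
      exact h1.sub h2
    apply antitoneOn_of_deriv_nonpos (convex_Ici 1)
    · intro t ht
      exact ((hderiv t ht).continuousAt).continuousWithinAt
    · intro t ht
      rw [interior_Ici] at ht
      have ht' : 1 < t := ht
      exact ((hderiv t (le_of_lt ht')).differentiableAt).differentiableWithinAt
    · intro t ht
      rw [interior_Ici] at ht
      have ht' : 1 < t := ht
      rw [(hderiv t (le_of_lt ht')).deriv]
      have h1 : (t + y) ^ (α - 1) ≤ t ^ (α - 1) :=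
        Real.rpow_le_rpow_of_nonpos (by linarith) (by linarith) (by linarith)
      nlinarith
  have h := key (Set.self_mem_Ici) (by exact hx : x ∈ Set.Ici 1) hx
  simp only [Real.one_rpow] at h
  linarith

lemma step_ineq {α p c : ℝ} (hα : α < 0) (hp : 0 < p) (hc : 0 < c)
    {x y : ℝ} (hx : 1 ≤ x) (hy : 1 ≤ y) :
    (p + c * x ^ α) * (p + c * (1 + y) ^ α) ≤ (p + c) * (p + c * (x + y) ^ α) := by
  have h1 := rpow_incr hα hx hy
  have h2 : x ^ α * (1 + y) ^ α ≤ (x + y) ^ α := by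
    rw [← Real.mul_rpow (by linarith) (by linarith)]
    exact Real.rpow_le_rpow_of_nonpos (by nlinarith) (by nlinarith) (le_of_lt hα)
  nlinarith [mul_le_mul_of_nonneg_left h1 (le_of_lt (mul_pos hp hc)),
    mul_le_mul_of_nonneg_left h2 (le_of_lt (mul_pos hc hc))]

lemma key_ineq {α p c : ℝ} (hα : α < 0) (hp : 0 < p) (hc : 0 < c)
    {x y : ℝ} (hx : 1 ≤ x) (hy : 1 ≤ y) :
    (p + c * x ^ α) * (p + c * y ^ α) * (p + c * (2:ℝ) ^ α)
      ≤ (p + c) * (p + c) * (p + c * (x + y) ^ α) := by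
  have s1 := step_ineq hα hp hc hx hy
  have s2 := step_ineq hα hp hc hy (le_refl (1:ℝ))
  rw [add_comm y 1] at s2
  norm_num at s2
  have hx0 : (0:ℝ) ≤ p + c * x ^ α := by positivity
  calc (p + c * x ^ α) * (p + c * y ^ α) * (p + c * (2:ℝ) ^ α)
      = (p + c * x ^ α) * ((p + c * y ^ α) * (p + c * (2:ℝ) ^ α)) := by ring
    _ ≤ (p + c * x ^ α) * ((p + c) * (p + c * (1 + y) ^ α)) := by
        apply mul_le_mul_of_nonneg_left _ hx0
        convert s2 using 4 <;> ring
    _ = (p + c) * ((p + c * x ^ α) * (p + c * (1 + y) ^ α)) := by ring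
    _ ≤ (p + c) * ((p + c) * (p + c * (x + y) ^ α)) :=
        mul_le_mul_of_nonneg_left s1 (by positivity)
    _ = (p + c) * (p + c) * (p + c * (x + y) ^ α) := by ring

lemma B_pos {α p c : ℝ} (hp : 0 < p) (hc : 0 < c) :
    0 < p + c * (2:ℝ) ^ α := by positivity

lemma ratio_interior {α p c : ℝ} (hα : α < 0) (hp : 0 < p) (hc : 0 < c)
    {x y : ℝ} (hx : 1 ≤ x) (hy : 1 ≤ y) :
    (p + c * x ^ α) * (p + c * y ^ α) / (p + c * (x + y) ^ α)
      ≤ (p + c) * (p + c) / (p + c * (2:ℝ) ^ α) := by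
  rw [div_le_div_iff₀ (by positivity) (B_pos hp hc)]
  exact key_ineq hα hp hc hx hy

lemma ratio_boundary {α p c : ℝ} (hα : α < 0) (hp : 0 < p) (hc : 0 < c)
    {d : ℝ} (hd : 1 ≤ d) :
    p + c * d ^ α ≤ (p + c) * (p + c) / (p + c * (2:ℝ) ^ α) := by
  rw [le_div_iff₀ (B_pos hp hc)]
  have h1 : d ^ α ≤ 1 := Real.rpow_le_one_of_one_le_of_nonpos hd (le_of_lt hα)
  have h2 : (2:ℝ) ^ α ≤ 1 := Real.rpow_le_one_of_one_le_of_nonpos (by norm_num) (le_of_lt hα)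
  have h3 : 0 ≤ d ^ α := Real.rpow_nonneg (by linarith) α
  have h4 : 0 ≤ (2:ℝ) ^ α := Real.rpow_nonneg (by norm_num) α
  have l1 : p + c * d ^ α ≤ p + c := by nlinarith
  have l2 : p + c * (2:ℝ) ^ α ≤ p + c := by nlinarith
  exact mul_le_mul l1 l2 (by positivity) (by positivity)

lemma ratio_p {α p c : ℝ} (hα : α < 0) (hp : 0 < p) (hc : 0 < c) :
    p ≤ (p + c) * (p + c) / (p + c * (2:ℝ) ^ α) := by
  have := ratio_boundary hα hp hc (le_refl (1:ℝ))
  have h3 : 0 ≤ (1:ℝ) ^ α := Real.rpow_nonneg (by norm_num) α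
  nlinarith [mul_pos hc (by norm_num : (0:ℝ) < 1)]

noncomputable def gp (p c α : ℝ) : List ℕ → ℝ
  | [] => 1
  | [_] => 1
  | a :: b :: l => (p + c * (((b - a : ℕ) : ℝ)) ^ α) * gp p c α (b :: l)

lemma gp_pos {p c α : ℝ} (hp : 0 < p) (hc : 0 < c) : ∀ l : List ℕ, 0 < gp p c α l
  | [] => by simp [gp]
  | [a] => by simp [gp]
  | a :: b :: l => by
    rw [gp]
    have h : (0:ℝ) ≤ ((b - a : ℕ) : ℝ) ^ α := Real.rpow_nonneg (Nat.cast_nonneg _) α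
    exact mul_pos (by nlinarith) (gp_pos hp hc (b :: l))

lemma gp_eq_prod (p c α : ℝ) : ∀ l : List ℕ,
    ∏ j ∈ Finset.range (l.length - 1),
      (p + c * ((l.getD (j + 1) 0 - l.getD j 0 : ℕ) : ℝ) ^ α) = gp p c α l
  | [] => by simp [gp]
  | [a] => by simp [gp]
  | a :: b :: l => by
    rw [gp, ← gp_eq_prod p c α (b :: l)]
    simp only [List.length_cons, Nat.add_sub_cancel]
    rw [Finset.prod_range_succ']
    simp only [List.getD_cons_succ, List.getD_cons_zero]
    ring

lemma gp_append (p c α : ℝ) (a b : ℕ) (ys : List ℕ) : ∀ xs : List ℕ,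
    gp p c α (xs ++ a :: b :: ys)
      = gp p c α (xs ++ [a]) * (p + c * (((b - a : ℕ) : ℝ)) ^ α) * gp p c α (b :: ys)
  | [] => by rw [List.nil_append, gp]; simp [gp]
  | [x] => by
    simp only [List.cons_append, List.nil_append]
    rw [gp, gp]
    rw [show gp p c α [x, a] = (p + c * (((a - x : ℕ) : ℝ)) ^ α) * gp p c α [a] from rfl]
    simp [gp]; ring
  | x :: x' :: xs => by
    have h := gp_append p c α a b ys (x' :: xs)
    simp only [List.cons_append] at *
    rw [gp, h, gp]
    ring

lemma Lop_eq (H p c : ℝ) (A : Finset ℕ) (hA : A ≠ ∅) :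
    Lop H p c A = p * gp p c (2 * H - 2) (A.sort (· ≤ ·)) := by
  rw [Lop, if_neg hA, ← gp_eq_prod, Finset.length_sort]

lemma Lop_pos {H p c : ℝ} (hp : 0 < p) (hc : 0 < c) (A : Finset ℕ) :
    0 < Lop H p c A := by
  by_cases hA : A = ∅
  · simp [Lop, hA]
  · rw [Lop_eq H p c A hA]
    exact mul_pos hp (gp_pos hp hc _)

lemma Lop_insert_le {H p c : ℝ} (hH1 : H < 1) (hp : 0 < p) (hc : 0 < c)
    (A : Finset ℕ) (i0 : ℕ) (hi0 : i0 ∉ A) :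
    Lop H p c (insert i0 A)
      ≤ Lop H p c A * ((p + c) * (p + c) / (p + c * (2:ℝ) ^ (2 * H - 2))) := by
  set α := 2 * H - 2 with hαdef
  have hα : α < 0 := by rw [hαdef]; linarith
  set B := (p + c) * (p + c) / (p + c * (2:ℝ) ^ α) with hBdef
  have hBpos : 0 < B := div_pos (by positivity) (B_pos hp hc)
  have hi0' : i0 ∈ (insert i0 A).sort (· ≤ ·) :=
    (Finset.mem_sort (· ≤ ·)).mpr (Finset.mem_insert_self _ _)
  obtain ⟨xs, ys, hsplit⟩ := List.append_of_mem hi0'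
  have hlt : ((insert i0 A).sort (· ≤ ·)).Pairwise (· < ·) := List.sortedLT_iff_pairwise.mp (Finset.sortedLT_sort _)
  rw [hsplit] at hlt
  have hins : insert i0 A ≠ ∅ := Finset.insert_ne_empty _ _
  -- A.sort = xs ++ ys
  have hA : A.sort (· ≤ ·) = xs ++ ys := by
    have p1 : List.Perm ((insert i0 A).sort (· ≤ ·)) ((insert i0 A).toList) :=
      Finset.sort_perm_toList _ _
    have p2 : List.Perm ((insert i0 A).toList) (i0 :: A.toList) := Finset.toList_insert hi0
    rw [hsplit] at p1
    have p3 : List.Perm (i0 :: (xs ++ ys)) (i0 :: A.toList) :=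
      (List.perm_middle.symm.trans p1).trans p2
    have p4 : List.Perm (A.sort (· ≤ ·)) (xs ++ ys) :=
      ((Finset.sort_perm_toList _ _).trans p3.cons_inv.symm)
    apply p4.eq_of_pairwise' (Finset.pairwise_sort _ _)
    have hle : ((insert i0 A).sort (· ≤ ·)).Pairwise (· ≤ ·) := Finset.pairwise_sort _ _
    rw [hsplit] at hle
    exact hle.sublist (((List.sublist_cons_self i0 ys).append_left xs))
  obtain ⟨hxs_pw, hys_pw, hcross⟩ := List.pairwise_append.mp hlt
  rcases List.eq_nil_or_concat xs with hxs0 | ⟨zs, a, rfl⟩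
  · subst hxs0
    cases ys with
    | nil =>
      -- A = ∅
      have hAe : A = ∅ := by
        apply Finset.eq_empty_of_forall_notMem
        intro x hx
        have := (Finset.mem_sort (α := ℕ) (· ≤ ·)).mpr hx
        rw [hA] at this
        simp at this
      subst hAe
      rw [Lop_eq H p c _ hins]
      simp only [List.nil_append] at hsplit
      rw [hsplit]
      have : Lop H p c (∅ : Finset ℕ) = 1 := by simp [Lop]
      rw [this, one_mul]
      rw [show gp p c α [i0] = 1 from rfl, mul_one]
      exact ratio_p hα hp hc
    | cons b ys' =>
      have hAne : A ≠ ∅ := by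
        intro h
        rw [h, Finset.sort_empty] at hA
        simp at hA
      rw [Lop_eq H p c _ hins, Lop_eq H p c _ hAne, hsplit, hA]
      simp only [List.nil_append]
      rw [show gp p c α (i0 :: b :: ys')
        = (p + c * (((b - i0 : ℕ) : ℝ)) ^ α) * gp p c α (b :: ys') from rfl]
      have hib : i0 < b := (List.pairwise_cons.mp hys_pw).1 b (List.mem_cons_self)
      have hd : (1:ℝ) ≤ ((b - i0 : ℕ) : ℝ) := by
        have : 1 ≤ b - i0 := by omega
        exact_mod_cast this
      have hf := ratio_boundary hα hp hc hd
      have hg := gp_pos (α := α) hp hc (b :: ys')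
      calc p * ((p + c * (((b - i0 : ℕ) : ℝ)) ^ α) * gp p c α (b :: ys'))
          = (p * gp p c α (b :: ys')) * (p + c * (((b - i0 : ℕ) : ℝ)) ^ α) := by ring
        _ ≤ (p * gp p c α (b :: ys')) * B :=
            mul_le_mul_of_nonneg_left hf (by positivity)
        _ = p * gp p c α (b :: ys') * B := by ring
  · simp only [List.concat_eq_append] at hsplit hA hcross hxs_pw hlt
    cases ys with
    | nil =>
      have hAne : A ≠ ∅ := by
        intro h
        rw [h, Finset.sort_empty] at hA
        simp at hA
      have hai : a < i0 := by
        apply hcross a (by simp) i0 (List.mem_cons_self)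
      rw [Lop_eq H p c _ hins, Lop_eq H p c _ hAne, hsplit, hA]
      rw [show zs ++ [a] ++ i0 :: ([] : List ℕ) = zs ++ a :: i0 :: [] by simp]
      rw [gp_append p c α a i0 [] zs]
      rw [show zs ++ [a] ++ ([] : List ℕ) = zs ++ [a] by simp]
      rw [show gp p c α [i0] = 1 from rfl, mul_one]
      have hd : (1:ℝ) ≤ ((i0 - a : ℕ) : ℝ) := by
        have : 1 ≤ i0 - a := by omega
        exact_mod_cast this
      have hf := ratio_boundary hα hp hc hd
      have hg := gp_pos (α := α) hp hc (zs ++ [a])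
      calc p * (gp p c α (zs ++ [a]) * (p + c * (((i0 - a : ℕ) : ℝ)) ^ α))
          = (p * gp p c α (zs ++ [a])) * (p + c * (((i0 - a : ℕ) : ℝ)) ^ α) := by ring
        _ ≤ (p * gp p c α (zs ++ [a])) * B :=
            mul_le_mul_of_nonneg_left hf (by positivity)
        _ = p * gp p c α (zs ++ [a]) * B := by ring
    | cons b ys' =>
      have hAne : A ≠ ∅ := by
        intro h
        rw [h, Finset.sort_empty] at hA
        simp at hA
      have hai : a < i0 := hcross a (by simp) i0 (List.mem_cons_self)
      have hib : i0 < b := (List.pairwise_cons.mp hys_pw).1 b (List.mem_cons_self)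
      rw [Lop_eq H p c _ hins, Lop_eq H p c _ hAne, hsplit, hA]
      rw [show zs ++ [a] ++ i0 :: b :: ys' = zs ++ a :: i0 :: b :: ys' by simp]
      rw [show zs ++ [a] ++ b :: ys' = zs ++ a :: b :: ys' by simp]
      rw [gp_append p c α a i0 (b :: ys') zs, gp_append p c α a b ys' zs]
      rw [show gp p c α (i0 :: b :: ys')
        = (p + c * (((b - i0 : ℕ) : ℝ)) ^ α) * gp p c α (b :: ys') from rfl]
      have hx : (1:ℝ) ≤ ((i0 - a : ℕ) : ℝ) := by
        have : 1 ≤ i0 - a := by omega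
        exact_mod_cast this
      have hy : (1:ℝ) ≤ ((b - i0 : ℕ) : ℝ) := by
        have : 1 ≤ b - i0 := by omega
        exact_mod_cast this
      have hsum : ((b - a : ℕ) : ℝ) = ((i0 - a : ℕ) : ℝ) + ((b - i0 : ℕ) : ℝ) := by
        have : (b - a : ℕ) = (i0 - a : ℕ) + (b - i0 : ℕ) := by omega
        rw [this, Nat.cast_add]
      have hfab : (0:ℝ) < p + c * (((b - a : ℕ) : ℝ)) ^ α := by positivity
      have hkey : (p + c * (((i0 - a : ℕ) : ℝ)) ^ α) * (p + c * (((b - i0 : ℕ) : ℝ)) ^ α)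
          ≤ B * (p + c * (((b - a : ℕ) : ℝ)) ^ α) := by
        have h := ratio_interior hα hp hc hx hy
        rw [← hsum] at h
        exact (div_le_iff₀ hfab).mp h
      have hg1 := gp_pos (α := α) hp hc (zs ++ [a])
      have hg2 := gp_pos (α := α) hp hc (b :: ys')
      calc p * (gp p c α (zs ++ [a]) * (p + c * (((i0 - a : ℕ) : ℝ)) ^ α) *
              ((p + c * (((b - i0 : ℕ) : ℝ)) ^ α) * gp p c α (b :: ys')))
          = (p * gp p c α (zs ++ [a]) * gp p c α (b :: ys')) *
              ((p + c * (((i0 - a : ℕ) : ℝ)) ^ α) * (p + c * (((b - i0 : ℕ) : ℝ)) ^ α)) := by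
            ring
        _ ≤ (p * gp p c α (zs ++ [a]) * gp p c α (b :: ys')) *
              (B * (p + c * (((b - a : ℕ) : ℝ)) ^ α)) :=
            mul_le_mul_of_nonneg_left hkey (by positivity)
        _ = p * (gp p c α (zs ++ [a]) * (p + c * (((b - a : ℕ) : ℝ)) ^ α) *
              gp p c α (b :: ys')) * B := by ring

/-- Lemma 6.2(i): under ASSUMPTION (a,b),
D*(A_1,…,A_m;{i_0}) = ∏_k L_k(A_k) (1 - Σ_{k'} L_{k'}(A_{k'} ∪ {i_0})/L_{k'}(A_{k'})) > 0. -/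
theorem stmt_15 (m : ℕ) (hm : 1 ≤ m) (H p c : ℕ → ℝ)
    (hH : ∀ k ∈ Finset.Icc 1 m, 0 < H k ∧ H k < 1)
    (hp : ∀ k ∈ Finset.Icc 1 m, 0 < p k ∧ p k < 1)
    (hc : ∀ k ∈ Finset.Icc 1 m, 0 < c k ∧ c k < 1)
    (hd : ∀ d : ℕ, 0 < d →
      ∑ k ∈ Finset.Icc 1 m, (p k + c k * (d : ℝ) ^ (2 * H k - 2)) < 1)
    (hb : ∀ i0 i1 i2 : ℕ, i0 < i1 → i1 < i2 →
      ∑ k ∈ Finset.Icc 1 m,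
        (p k + c k * ((i1 - i0 : ℕ) : ℝ) ^ (2 * H k - 2)) *
          (p k + c k * ((i2 - i1 : ℕ) : ℝ) ^ (2 * H k - 2)) /
            (p k + c k * ((i2 - i0 : ℕ) : ℝ) ^ (2 * H k - 2)) < 1)
    (A : ℕ → Finset ℕ) (i0 : ℕ)
    (hdisj : ∀ k k', k ≠ k' → Disjoint (A k) (A k'))
    (hi0 : ∀ k ∈ Finset.Icc 1 m, i0 ∉ A k) :
    0 < (∏ k ∈ Finset.Icc 1 m, Lop (H k) (p k) (c k) (A k)) *
        (1 - ∑ k ∈ Finset.Icc 1 m,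
          Lop (H k) (p k) (c k) (A k ∪ {i0}) / Lop (H k) (p k) (c k) (A k)) := by
  have hprod : 0 < ∏ k ∈ Finset.Icc 1 m, Lop (H k) (p k) (c k) (A k) :=
    Finset.prod_pos fun k hk => Lop_pos (hp k hk).1 (hc k hk).1 _
  have hB := hb 0 1 2 (by norm_num) (by norm_num)
  norm_num [Real.one_rpow] at hB
  have hsum : ∑ k ∈ Finset.Icc 1 m,
      Lop (H k) (p k) (c k) (A k ∪ {i0}) / Lop (H k) (p k) (c k) (A k)
      ≤ ∑ k ∈ Finset.Icc 1 m,
        (p k + c k) * (p k + c k) / (p k + c k * (2:ℝ) ^ (2 * H k - 2)) := by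
    apply Finset.sum_le_sum
    intro k hk
    have hAu : A k ∪ {i0} = insert i0 (A k) := by ext x; simp [or_comm]
    rw [hAu, div_le_iff₀ (Lop_pos (hp k hk).1 (hc k hk).1 _)]
    exact (Lop_insert_le (hH k hk).2 (hp k hk).1 (hc k hk).1 (A k) i0 (hi0 k hk)).trans_eq
      (mul_comm _ _)
  have : ∑ k ∈ Finset.Icc 1 m,
      Lop (H k) (p k) (c k) (A k ∪ {i0}) / Lop (H k) (p k) (c k) (A k) < 1 :=
    lt_of_le_of_lt hsum (by convert hB using 2)
  have h1 : 0 < 1 - ∑ k ∈ Finset.Icc 1 m,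
      Lop (H k) (p k) (c k) (A k ∪ {i0}) / Lop (H k) (p k) (c k) (A k) := by linarith
  exact mul_pos hprod h1
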